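/- Let 0 < q < 1, r ≥ 1 an integer, and z a complex number with Re z > 0. Then G_r(z+1;q) = G_{r-1}(z;q) · G_r(z;q), where G_r is the q-analogue of the multiple gamma function. -/

import Mathlib

open Finset Filter Topology

/-- Generalized binomial coefficient C(z,k) = z(z-1)⋯(z-k+1)/k!. -/
noncomputable def genBinom (z : ℂ) (k : ℕ) : ℂ :=
  (∏ i ∈ Finset.range k, (z - i)) / (Nat.factorial k)

/-- g_r(z,n) = ∑_{m=1}^{r-1} (-1)^{m-1} C(z, r-m) C(n+m-2, m-1), with g_1 = 0. -/
noncomputable def qg (r : ℕ) (z : ℂ) (n : ℕ) : ℂ :=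
  ∑ m ∈ Finset.Icc 1 (r - 1),
    (-1 : ℂ) ^ (m - 1) * genBinom z (r - m) * (Nat.choose (n + m - 2) (m - 1))

/-- The q-analogue of the multiple gamma function: `qMG q r z = G_r(z; q)`.
For `r = 0` it is the q-number `[z] = (1-q^z)/(1-q)`; for `r ≥ 1`,
`G_r(z+1;q) = (1-q)^{-C(z,r)} ∏_{n≥1} ((1-q^{z+n})/(1-q^n))^{(-1)^r C(n+r-2,r-1)} (1-q^n)^{g_r(z,n)}`. -/
noncomputable def qMG (q : ℝ) (r : ℕ) (z : ℂ) : ℂ :=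
  if r = 0 then (1 - (q : ℂ) ^ z) / (1 - (q : ℂ)) else
    (1 - (q : ℂ)) ^ (-genBinom (z - 1) r) *
      ∏' n : ℕ,
        (((1 - (q : ℂ) ^ ((z - 1) + (n + 1))) / (1 - (q : ℂ) ^ (n + 1)))
            ^ ((-1 : ℂ) ^ r * (Nat.choose (n + 1 + r - 2) (r - 1))) *
          (1 - (q : ℂ) ^ (n + 1)) ^ (qg r (z - 1) (n + 1)))

namespace Stmt6Aux

open Complex Real

variable {q : ℝ}

/-! ### basic facts about `1 - q^w` -/

lemma norm_q_cpow (hq : 0 < q) (w : ℂ) : ‖(q:ℂ) ^ w‖ = q ^ w.re := by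
  rw [Complex.norm_cpow_eq_rpow_re_of_pos hq]

lemma norm_q_cpow_lt_one (hq : 0 < q) (hq1 : q < 1) {w : ℂ} (hw : 0 < w.re) :
    ‖(q:ℂ) ^ w‖ < 1 := by
  rw [norm_q_cpow hq]; exact Real.rpow_lt_one hq.le hq1 hw

lemma re_pos (hq : 0 < q) (hq1 : q < 1) {w : ℂ} (hw : 0 < w.re) :
    0 < (1 - (q:ℂ) ^ w).re := by
  have h := norm_q_cpow_lt_one hq hq1 hw
  have h2 : |((q:ℂ)^w).re| ≤ ‖(q:ℂ)^w‖ := Complex.abs_re_le_norm _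
  have h3 : (1 - (q:ℂ) ^ w).re = 1 - ((q:ℂ)^w).re := by simp
  rw [h3]
  cases abs_le.mp h2 with
  | intro h4 h5 => linarith

lemma ne_zero_of_re_pos' {x : ℂ} (hx : 0 < x.re) : x ≠ 0 := by
  intro h; rw [h] at hx; simp at hx

lemma log_div_of_re_pos {a b : ℂ} (ha : 0 < a.re) (hb : 0 < b.re) :
    Complex.log (a / b) = Complex.log a - Complex.log b := by
  have ha0 : a ≠ 0 := ne_zero_of_re_pos' ha
  have hb0 : b ≠ 0 := ne_zero_of_re_pos' hb
  have h1 : |a.arg| < π/2 := Complex.abs_arg_lt_pi_div_two_iff.mpr (Or.inl ha)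
  have h2 : |b.arg| < π/2 := Complex.abs_arg_lt_pi_div_two_iff.mpr (Or.inl hb)
  have hpi : 0 < π := Real.pi_pos
  have hargb : b.arg ≠ π := by
    intro h; rw [h] at h2; rw [abs_of_pos hpi] at h2; linarith
  have harginv : (b⁻¹).arg = -b.arg := by
    rw [Complex.arg_inv, if_neg hargb]
  rw [div_eq_mul_inv, Complex.log_mul ha0 (inv_ne_zero hb0) ?_, Complex.log_inv _ hargb,
    sub_eq_add_neg]
  rw [harginv]
  constructor
  · cases abs_lt.mp h1 with
    | intro u v => cases abs_lt.mp h2 with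
      | intro u2 v2 => linarith
  · cases abs_lt.mp h1 with
    | intro u v => cases abs_lt.mp h2 with
      | intro u2 v2 => linarith

lemma cpow_factor {a b : ℂ} (ha : 0 < a.re) (hb : 0 < b.re) (c d : ℂ) :
    (a / b) ^ c * b ^ d
      = Complex.exp (c * (Complex.log a - Complex.log b) + d * Complex.log b) := by
  have ha0 : a ≠ 0 := ne_zero_of_re_pos' ha
  have hb0 : b ≠ 0 := ne_zero_of_re_pos' hb
  rw [Complex.cpow_def_of_ne_zero (div_ne_zero ha0 hb0), Complex.cpow_def_of_ne_zero hb0,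
    log_div_of_re_pos ha hb, ← Complex.exp_add]
  ring_nf

/-! ### polynomially bounded coefficient sequences -/

/-- polynomially bounded sequence of coefficients -/
def PB (e : ℕ → ℂ) : Prop := ∃ C : ℝ, ∃ k : ℕ, ∀ n : ℕ, ‖e n‖ ≤ C * ((n:ℝ)+1)^k

lemma PB.const (a : ℂ) : PB (fun _ => a) :=
  ⟨‖a‖, 0, fun n => by simp⟩

lemma PB.nonneg {e : ℕ → ℂ} (h : PB e) : ∃ C : ℝ, 0 ≤ C ∧ ∃ k : ℕ, ∀ n : ℕ,
    ‖e n‖ ≤ C * ((n:ℝ)+1)^k := by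
  obtain ⟨C, k, hC⟩ := h
  refine ⟨C, ?_, k, hC⟩
  have h0 := hC 0
  have h1 := norm_nonneg (e 0)
  have h2 : ((0:ℕ):ℝ) + 1 = 1 := by norm_num
  rw [h2, one_pow, mul_one] at h0
  linarith

lemma PB.add {e f : ℕ → ℂ} (he : PB e) (hf : PB f) : PB (fun n => e n + f n) := by
  obtain ⟨C, hC0, k, hC⟩ := he.nonneg
  obtain ⟨D, hD0, l, hD⟩ := hf.nonneg
  refine ⟨C + D, max k l, fun n => ?_⟩
  have h1 : ((n:ℝ)+1)^k ≤ ((n:ℝ)+1)^(max k l) :=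
    pow_le_pow_right₀ (by linarith [Nat.cast_nonneg (α := ℝ) n]) (le_max_left _ _)
  have h2 : ((n:ℝ)+1)^l ≤ ((n:ℝ)+1)^(max k l) :=
    pow_le_pow_right₀ (by linarith [Nat.cast_nonneg (α := ℝ) n]) (le_max_right _ _)
  calc ‖e n + f n‖ ≤ ‖e n‖ + ‖f n‖ := norm_add_le _ _
    _ ≤ C * ((n:ℝ)+1)^k + D * ((n:ℝ)+1)^l := add_le_add (hC n) (hD n)
    _ ≤ C * ((n:ℝ)+1)^(max k l) + D * ((n:ℝ)+1)^(max k l) := by gcongr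
    _ = (C + D) * ((n:ℝ)+1)^(max k l) := by ring

lemma PB.neg {e : ℕ → ℂ} (he : PB e) : PB (fun n => -(e n)) := by
  obtain ⟨C, k, hC⟩ := he
  exact ⟨C, k, fun n => by simpa using hC n⟩

lemma PB.sub {e f : ℕ → ℂ} (he : PB e) (hf : PB f) : PB (fun n => e n - f n) := by
  simpa [sub_eq_add_neg] using he.add hf.neg

lemma PB.const_mul {e : ℕ → ℂ} (he : PB e) (a : ℂ) : PB (fun n => a * e n) := by
  obtain ⟨C, hC0, k, hC⟩ := he.nonneg
  refine ⟨‖a‖ * C, k, fun n => ?_⟩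
  rw [norm_mul, mul_assoc]
  exact mul_le_mul_of_nonneg_left (hC n) (norm_nonneg a)

lemma PB.congr {e f : ℕ → ℂ} (he : PB e) (h : ∀ n, e n = f n) : PB f := by
  obtain ⟨C, k, hC⟩ := he
  exact ⟨C, k, fun n => (h n) ▸ hC n⟩

lemma PB.choose (a b : ℕ) : PB (fun n => (((n + a).choose b : ℕ) : ℂ)) := by
  refine ⟨((a:ℝ)+1)^b, b, fun n => ?_⟩
  have h1 : (n + a).choose b ≤ (n + a)^b := Nat.choose_le_pow _ _
  have h2 : (n + a) ≤ (n+1) * (a+1) := by nlinarith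
  have h3 : (n + a)^b ≤ ((n+1)*(a+1))^b := Nat.pow_le_pow_left h2 b
  have h4 : ((n + a).choose b : ℝ) ≤ (((n+1)*(a+1))^b : ℕ) := by
    exact_mod_cast le_trans h1 h3
  rw [Complex.norm_natCast]
  refine le_trans h4 ?_
  push_cast
  rw [mul_pow]
  apply le_of_eq
  ring

lemma PB.sum {s : Finset ℕ} {f : ℕ → ℕ → ℂ} (h : ∀ m ∈ s, PB (f m)) :
    PB (fun n => ∑ m ∈ s, f m n) := by
  classical
  induction s using Finset.induction with
  | empty => simpa using PB.const 0
  | insert _ _ hx ih =>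
      rename_i a s'
      simp only [Finset.sum_insert hx]
      exact (h a (Finset.mem_insert_self a s')).add
        (ih (fun m hm => h m (Finset.mem_insert_of_mem hm)))

/-! ### summability -/

lemma summable_poly_geom (hq : 0 < q) (hq1 : q < 1) (k : ℕ) :
    Summable (fun n : ℕ => ((n:ℝ)+1)^k * q ^ n) := by
  have h : Summable (fun n : ℕ => (n:ℝ)^k * q ^ n) :=
    summable_pow_mul_geometric_of_norm_lt_one k
      (by rwa [Real.norm_eq_abs, abs_of_pos hq])
  have h2 := (summable_nat_add_iff 1).mpr h
  have h3 := h2.mul_left (q⁻¹)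
  apply h3.congr
  intro n
  have hq0 : q ≠ 0 := hq.ne'
  push_cast
  field_simp
  ring

lemma summable_coeff_log (hq : 0 < q) (hq1 : q < 1) {w : ℂ} (hw : 0 < w.re)
    {e : ℕ → ℂ} (he : PB e) :
    Summable (fun n : ℕ => e n * Complex.log (1 - (q:ℂ) ^ (w + n))) := by
  obtain ⟨C, hC0, k, hC⟩ := he.nonneg
  apply Summable.of_norm_bounded_eventually_nat
    (g := fun n => (C * (3/2)) * (((n:ℝ)+1)^k * q ^ n))
    (((summable_poly_geom hq hq1 k)).mul_left _)
  have hqn : ∀ n : ℕ, ‖(q:ℂ) ^ (w + (n:ℂ))‖ ≤ q ^ n := by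
    intro n
    rw [norm_q_cpow hq]
    have hre : (w + (n:ℂ)).re = w.re + n := by simp
    rw [hre, Real.rpow_add hq, Real.rpow_natCast]
    have h1 : q ^ w.re ≤ 1 := Real.rpow_le_one hq.le hq1.le hw.le
    have h2 : (0:ℝ) ≤ q ^ n := pow_nonneg hq.le n
    nlinarith
  have htend : Tendsto (fun n : ℕ => q ^ n) atTop (nhds 0) :=
    tendsto_pow_atTop_nhds_zero_of_lt_one hq.le hq1
  have hev : ∀ᶠ n : ℕ in atTop, q ^ n < 1/2 :=
    htend.eventually_lt_const (by norm_num)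
  filter_upwards [hev] with n hn
  have hlog : ‖Complex.log (1 - (q:ℂ)^(w + (n:ℂ)))‖ ≤ 3/2 * q ^ n := by
    have hz : ‖-((q:ℂ)^(w + (n:ℂ)))‖ ≤ 1/2 := by
      rw [norm_neg]; exact le_trans (hqn n) hn.le
    have hb := Complex.norm_log_one_add_half_le_self hz
    rw [norm_neg] at hb
    have heq : (1:ℂ) + -((q:ℂ)^(w + (n:ℂ))) = 1 - (q:ℂ)^(w + (n:ℂ)) := by ring
    rw [heq] at hb
    refine le_trans hb ?_
    nlinarith [hqn n]
  rw [norm_mul]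
  calc ‖e n‖ * ‖Complex.log (1 - (q:ℂ)^(w + (n:ℂ)))‖
      ≤ (C * ((n:ℝ)+1)^k) * (3/2 * q ^ n) := by
        apply mul_le_mul (hC n) hlog (norm_nonneg _)
        positivity
    _ = (C * (3/2)) * (((n:ℝ)+1)^k * q ^ n) := by ring

/-! ### Pascal-type identities -/

lemma prod_shift (z : ℂ) (k : ℕ) :
    ∏ i ∈ Finset.range (k+1), (z - i) = z * ∏ i ∈ Finset.range k, ((z-1) - i) := by
  rw [Finset.prod_range_succ']
  have h : ∀ i ∈ Finset.range k, z - (((i+1):ℕ):ℂ) = (z-1) - i := by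
    intro i _; push_cast; ring
  rw [Finset.prod_congr rfl h, Nat.cast_zero, sub_zero, mul_comm]

lemma genBinom_pascal (z : ℂ) (k : ℕ) :
    genBinom z (k+1) = genBinom (z-1) (k+1) + genBinom (z-1) k := by
  unfold genBinom
  rw [prod_shift z k, Finset.prod_range_succ]
  have hfac : ((Nat.factorial (k+1) : ℂ)) = (k+1) * (Nat.factorial k) := by
    push_cast [Nat.factorial_succ]; ring
  rw [hfac]
  have h1 : ((Nat.factorial k : ℂ)) ≠ 0 :=
    Nat.cast_ne_zero.mpr (Nat.factorial_ne_zero k)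
  have h2 : ((k:ℂ)+1) ≠ 0 := by
    exact_mod_cast Nat.succ_ne_zero k
  field_simp
  ring

lemma genBinom_zero (z : ℂ) : genBinom z 0 = 1 := by
  simp [genBinom, Nat.factorial]

lemma genBinom_one (z : ℂ) : genBinom z 1 = z := by
  simp [genBinom, Nat.factorial]

/-- The key recursion for qg. -/
lemma qg_pascal (s : ℕ) (z : ℂ) (n : ℕ) :
    qg (s+2) z (n+1)
      = qg (s+2) (z-1) (n+1) + qg (s+1) (z-1) (n+1)
        + (-1:ℂ)^(s+2) * (((n+s).choose s : ℕ) : ℂ) := by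
  unfold qg
  have hs2 : s + 2 - 1 = s + 1 := rfl
  have hs1 : s + 1 - 1 = s := rfl
  rw [hs2, hs1]
  have hsplit : ∀ f : ℕ → ℂ, ∑ m ∈ Finset.Icc 1 (s+1), f m
      = (∑ m ∈ Finset.Icc 1 s, f m) + f (s+1) := by
    intro f
    rw [← Finset.sum_Icc_succ_top (by omega : 1 ≤ s + 1)]
  rw [hsplit, hsplit]
  have hterm : ∀ m ∈ Finset.Icc 1 (s+1),
      (-1:ℂ)^(m-1) * genBinom z (s+2-m) * ((n+1+m-2).choose (m-1) : ℕ)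
      = (-1:ℂ)^(m-1) * genBinom (z-1) (s+2-m) * ((n+1+m-2).choose (m-1) : ℕ)
        + (-1:ℂ)^(m-1) * genBinom (z-1) (s+1-m) * ((n+1+m-2).choose (m-1) : ℕ) := by
    intro m hm
    simp only [Finset.mem_Icc] at hm
    have h1 : s + 2 - m = (s + 1 - m) + 1 := by omega
    rw [h1, genBinom_pascal]
    ring
  rw [Finset.sum_congr rfl (fun m hm => hterm m (by
    simp only [Finset.mem_Icc] at hm ⊢; omega)),
    hterm (s+1) (by simp only [Finset.mem_Icc]; omega)]
  rw [Finset.sum_add_distrib]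
  have e1 : s + 2 - (s+1) = 1 := by omega
  have e2 : s + 1 - (s+1) = 0 := by omega
  have e3 : n + 1 + (s+1) - 2 = n + s := by omega
  have e4 : s + 1 - 1 = s := rfl
  rw [e1, e2, e3, e4, genBinom_zero]
  have e5 : (-1:ℂ)^(s+2) = (-1)^s := by rw [pow_add]; norm_num
  rw [e5]
  ring

/-! ### the pieces of `qMG` -/

noncomputable def fA (q : ℝ) (z : ℂ) (n : ℕ) : ℂ := Complex.log (1 - (q:ℂ) ^ (z + (n:ℂ)))

noncomputable def fB (q : ℝ) (n : ℕ) : ℂ := Complex.log (1 - (q:ℂ) ^ ((1:ℂ) + (n:ℂ)))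

noncomputable def cE (r : ℕ) (n : ℕ) : ℂ :=
  (-1:ℂ)^r * (((n + 1 + r - 2).choose (r - 1) : ℕ) : ℂ)

lemma PB_cE (r : ℕ) (hr : r ≠ 0) : PB (cE r) := by
  have h : ∀ n : ℕ, n + 1 + r - 2 = n + (r - 1) := by intro n; omega
  exact ((PB.choose (r-1) (r-1)).const_mul ((-1:ℂ)^r)).congr
    (fun n => by unfold cE; rw [h n])

lemma PB_qg (r : ℕ) (w : ℂ) : PB (fun n => qg r w (n+1)) := by
  unfold qg
  apply PB.sum
  intro m hm
  simp only [Finset.mem_Icc] at hm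
  have h : ∀ n : ℕ, n + 1 + m - 2 = n + (m - 1) := by intro n; omega
  exact ((PB.choose (m-1) (m-1)).const_mul ((-1:ℂ)^(m-1) * genBinom w (r-m))).congr
    (fun n => by rw [h n])

lemma fA_pred (z : ℂ) (n : ℕ) : fA q (z - 1) (n+1) = fA q z n := by
  unfold fA
  congr 2
  push_cast
  ring

lemma summable_mul_fA (hq : 0 < q) (hq1 : q < 1) {z : ℂ} (hz : 0 < z.re)
    {e : ℕ → ℂ} (he : PB e) : Summable (fun n => e n * fA q z n) :=
  summable_coeff_log hq hq1 hz he

lemma summable_mul_fA_succ (hq : 0 < q) (hq1 : q < 1) {z : ℂ} (hz : 0 < (z+1).re)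
    {e : ℕ → ℂ} (he : PB e) : Summable (fun n => e n * fA q z (n+1)) := by
  apply (summable_mul_fA hq hq1 hz he).congr
  intro n
  unfold fA
  congr 3
  push_cast
  ring

lemma summable_mul_fB (hq : 0 < q) (hq1 : q < 1)
    {e : ℕ → ℂ} (he : PB e) : Summable (fun n => e n * fB q n) :=
  summable_coeff_log hq hq1 (by norm_num : (0:ℝ) < (1:ℂ).re) he

/-! ### the main reduction -/

lemma qMG_eq_exp (hq : 0 < q) (hq1 : q < 1) (r : ℕ) (hr : r ≠ 0) (w : ℂ)
    (hw : 0 < (w + 1).re) :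
    qMG q r (w + 1) = Complex.exp (Complex.log (1 - (q:ℂ)) * (-genBinom w r)
      + ∑' n : ℕ, (cE r n * (fA q w (n+1) - fB q n) + qg r w (n+1) * fB q n)) := by
  have hwre : 0 < w.re + 1 := by simpa using hw
  have hq1c : (1 - (q:ℂ)) ≠ 0 := by
    apply ne_zero_of_re_pos'
    simp only [Complex.sub_re, Complex.one_re, Complex.ofReal_re]
    linarith
  have hb : ∀ n : ℕ, ((q:ℂ))^(n+1) = (q:ℂ)^((1:ℂ)+(n:ℂ)) := by
    intro n; rw [← Complex.cpow_natCast]; congr 1; push_cast; ring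
  have hApos : ∀ n : ℕ, 0 < (1 - (q:ℂ)^(w + ((n:ℂ)+1))).re := by
    intro n
    apply re_pos hq hq1
    have : (w + ((n:ℂ)+1)).re = w.re + ((n:ℝ)+1) := by simp
    rw [this]
    have := Nat.cast_nonneg (α := ℝ) n
    linarith
  have hBpos : ∀ n : ℕ, 0 < (1 - (q:ℂ)^((1:ℂ)+(n:ℂ))).re := by
    intro n
    apply re_pos hq hq1
    have : ((1:ℂ)+(n:ℂ)).re = 1 + (n:ℝ) := by simp
    rw [this]
    have := Nat.cast_nonneg (α := ℝ) n
    linarith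
  have hsum : Summable (fun n : ℕ =>
      cE r n * (fA q w (n+1) - fB q n) + qg r w (n+1) * fB q n) := by
    apply Summable.congr (f := fun n => cE r n * fA q w (n+1)
      + (qg r w (n+1) - cE r n) * fB q n)
    · exact (summable_mul_fA_succ hq hq1 (by simpa using hw) (PB_cE r hr)).add
        (summable_mul_fB hq hq1 ((PB_qg r w).sub (PB_cE r hr)))
    · intro n; ring
  have hfac : ∀ n : ℕ,
      ((1 - (q:ℂ) ^ ((w + 1 - 1) + ((n:ℂ) + 1))) / (1 - (q:ℂ) ^ (n + 1)))
          ^ ((-1:ℂ) ^ r * (((n + 1 + r - 2).choose (r - 1) : ℕ) : ℂ)) *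
        (1 - (q:ℂ) ^ (n + 1)) ^ (qg r (w + 1 - 1) (n + 1))
      = Complex.exp (cE r n * (fA q w (n+1) - fB q n) + qg r w (n+1) * fB q n) := by
    intro n
    have hw1 : w + 1 - 1 = w := by ring
    rw [hw1, hb n, cpow_factor (hApos n) (hBpos n)]
    have hA : fA q w (n+1) = Complex.log (1 - (q:ℂ)^(w + ((n:ℂ)+1))) := by
      unfold fA
      congr 3
      push_cast
      ring
    rw [hA]
    rfl
  unfold qMG
  rw [if_neg hr]
  have hw1 : w + 1 - 1 = w := by ring
  rw [tprod_congr hfac, hw1, Complex.cpow_def_of_ne_zero hq1c]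
  have hprod : (∏' n : ℕ, Complex.exp
      (cE r n * (fA q w (n+1) - fB q n) + qg r w (n+1) * fB q n))
      = Complex.exp (∑' n : ℕ,
        (cE r n * (fA q w (n+1) - fB q n) + qg r w (n+1) * fB q n)) := by
    have h := (hsum.hasSum.cexp).tprod_eq
    simpa [Function.comp] using h
  rw [hprod, ← Complex.exp_add]

end Stmt6Aux


namespace Stmt6Aux

lemma cE_one (n : ℕ) : cE 1 n = -1 := by
  unfold cE
  have h : n + 1 + 1 - 2 = n := by omega
  rw [h]
  simp

lemma qg_one (w : ℂ) (n : ℕ) : qg 1 w n = 0 := by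
  unfold qg
  simp

lemma cE_succ_succ (s n : ℕ) : cE (s+1) (n+1) + cE (s+2) (n+1) = cE (s+2) n := by
  unfold cE
  have e1 : n + 1 + 1 + (s+1) - 2 = n + s + 1 := by omega
  have e2 : n + 1 + 1 + (s+2) - 2 = n + s + 1 + 1 := by omega
  have e3 : n + 1 + (s+2) - 2 = n + s + 1 := by omega
  have e4 : (s+1) - 1 = s := rfl
  have e5 : (s+2) - 1 = s + 1 := rfl
  rw [e1, e2, e3, e4, e5, Nat.choose_succ_succ (n+s+1) s]
  push_cast
  rw [pow_succ, pow_succ]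
  ring

lemma cE_zero_sum (s : ℕ) : cE (s+1) 0 + cE (s+2) 0 = 0 := by
  unfold cE
  have e1 : 0 + 1 + (s+1) - 2 = s := by omega
  have e2 : 0 + 1 + (s+2) - 2 = s + 1 := by omega
  have e4 : (s+1) - 1 = s := rfl
  have e5 : (s+2) - 1 = s + 1 := rfl
  rw [e1, e2, e4, e5, Nat.choose_self, Nat.choose_self]
  rw [pow_succ, pow_succ]
  ring

lemma qg_key (s : ℕ) (z : ℂ) (n : ℕ) :
    (qg (s+1) (z-1) (n+1) - cE (s+1) n) + (qg (s+2) (z-1) (n+1) - cE (s+2) n)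
      = qg (s+2) z (n+1) - cE (s+2) n := by
  rw [qg_pascal s z n]
  have h : cE (s+1) n = (-1:ℂ)^(s+1) * (((n+s).choose s : ℕ) : ℂ) := by
    unfold cE
    have e1 : n + 1 + (s+1) - 2 = n + s := by omega
    have e4 : (s+1) - 1 = s := rfl
    rw [e1, e4]
  rw [h, pow_succ, pow_succ]
  ring

end Stmt6Aux

theorem stmt6 (q : ℝ) (hq : 0 < q) (hq1 : q < 1) (r : ℕ) (hr : 1 ≤ r) (z : ℂ) (hz : 0 < z.re) :
    qMG q r (z + 1) = qMG q (r - 1) z * qMG q r z := by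
  open Stmt6Aux in
  have hz1 : 0 < ((z - 1) + 1).re := by simpa using hz
  have hzp1 : 0 < (z + 1).re := by
    simp only [Complex.add_re, Complex.one_re]
    linarith
  have hq1c : (1 - (q:ℂ)) ≠ 0 := by
    apply Stmt6Aux.ne_zero_of_re_pos'
    simp only [Complex.sub_re, Complex.one_re, Complex.ofReal_re]
    linarith
  by_cases h1 : r = 1
  · subst h1
    have hL := Stmt6Aux.qMG_eq_exp (q := q) hq hq1 1 one_ne_zero z hzp1
    have hR := Stmt6Aux.qMG_eq_exp (q := q) hq hq1 1 one_ne_zero (z-1) hz1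
    rw [sub_add_cancel] at hR
    have S1 : Summable (fun n : ℕ => (-1 : ℂ) * Stmt6Aux.fA q z (n+1)) :=
      Stmt6Aux.summable_mul_fA_succ hq hq1 hzp1 (Stmt6Aux.PB.const (-1))
    have S2 : Summable (fun n : ℕ => Stmt6Aux.fB q n) :=
      (Stmt6Aux.summable_mul_fB hq hq1 (Stmt6Aux.PB.const 1)).congr (fun n => one_mul _)
    have S3 : Summable (fun n : ℕ => (-1 : ℂ) * Stmt6Aux.fA q z n) :=
      Stmt6Aux.summable_mul_fA hq hq1 hz (Stmt6Aux.PB.const (-1))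
    have hA1 : ∑' n : ℕ, (Stmt6Aux.cE 1 n * (Stmt6Aux.fA q z (n+1) - Stmt6Aux.fB q n)
          + qg 1 z (n+1) * Stmt6Aux.fB q n)
        = ∑' n : ℕ, ((-1 : ℂ) * Stmt6Aux.fA q z (n+1)) + ∑' n : ℕ, Stmt6Aux.fB q n := by
      rw [← Summable.tsum_add S1 S2]
      apply tsum_congr
      intro n
      rw [Stmt6Aux.cE_one n, Stmt6Aux.qg_one]
      ring
    have hA2 : ∑' n : ℕ, (Stmt6Aux.cE 1 n * (Stmt6Aux.fA q (z-1) (n+1) - Stmt6Aux.fB q n)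
          + qg 1 (z-1) (n+1) * Stmt6Aux.fB q n)
        = ∑' n : ℕ, ((-1 : ℂ) * Stmt6Aux.fA q z n) + ∑' n : ℕ, Stmt6Aux.fB q n := by
      rw [← Summable.tsum_add S3 S2]
      apply tsum_congr
      intro n
      rw [Stmt6Aux.cE_one n, Stmt6Aux.qg_one, Stmt6Aux.fA_pred]
      ring
    have hA3 : ∑' n : ℕ, ((-1 : ℂ) * Stmt6Aux.fA q z n)
        = (-1 : ℂ) * Stmt6Aux.fA q z 0 + ∑' n : ℕ, ((-1 : ℂ) * Stmt6Aux.fA q z (n+1)) :=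
      Summable.tsum_eq_zero_add S3
    have hz0 : (1 - (q:ℂ)^z) ≠ 0 :=
      Stmt6Aux.ne_zero_of_re_pos' (Stmt6Aux.re_pos hq hq1 hz)
    have h0 : qMG q 0 z = Complex.exp (Stmt6Aux.fA q z 0 - Complex.log (1 - (q:ℂ))) := by
      unfold qMG
      rw [if_pos rfl]
      have hfa : Stmt6Aux.fA q z 0 = Complex.log (1 - (q:ℂ)^z) := by
        unfold Stmt6Aux.fA
        norm_num
      rw [hfa, Complex.exp_sub, Complex.exp_log hz0, Complex.exp_log hq1c]
    have hsub : (1 : ℕ) - 1 = 0 := rfl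
    rw [hL, hR, hsub, h0, hA1, hA2, hA3, Stmt6Aux.genBinom_one, Stmt6Aux.genBinom_one,
      ← Complex.exp_add]
    congr 1
    ring
  · obtain ⟨s, rfl⟩ : ∃ s, r = s + 2 := ⟨r - 2, by omega⟩
    have hne2 : (s + 2 : ℕ) ≠ 0 := by omega
    have hne1 : (s + 1 : ℕ) ≠ 0 := by omega
    have hL := Stmt6Aux.qMG_eq_exp (q := q) hq hq1 (s+2) hne2 z hzp1
    have hR2 := Stmt6Aux.qMG_eq_exp (q := q) hq hq1 (s+2) hne2 (z-1) hz1
    rw [sub_add_cancel] at hR2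
    have hR1 := Stmt6Aux.qMG_eq_exp (q := q) hq hq1 (s+1) hne1 (z-1) hz1
    rw [sub_add_cancel] at hR1
    have hsub : (s + 2 : ℕ) - 1 = s + 1 := rfl
    -- coefficients are polynomially bounded
    have Pc := Stmt6Aux.PB_cE (s+2) hne2
    have Pc' := Stmt6Aux.PB_cE (s+1) hne1
    have Pg := Stmt6Aux.PB_qg (s+2) z
    have Pg1 := Stmt6Aux.PB_qg (s+1) (z-1)
    have Pg2 := Stmt6Aux.PB_qg (s+2) (z-1)
    -- summability
    have SAc1 : Summable (fun n : ℕ => Stmt6Aux.cE (s+2) n * Stmt6Aux.fA q z (n+1)) :=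
      Stmt6Aux.summable_mul_fA_succ hq hq1 hzp1 Pc
    have SAc : Summable (fun n : ℕ => Stmt6Aux.cE (s+2) n * Stmt6Aux.fA q z n) :=
      Stmt6Aux.summable_mul_fA hq hq1 hz Pc
    have SAc' : Summable (fun n : ℕ => Stmt6Aux.cE (s+1) n * Stmt6Aux.fA q z n) :=
      Stmt6Aux.summable_mul_fA hq hq1 hz Pc'
    have SB : Summable (fun n : ℕ =>
        (qg (s+2) z (n+1) - Stmt6Aux.cE (s+2) n) * Stmt6Aux.fB q n) :=
      Stmt6Aux.summable_mul_fB hq hq1 (Pg.sub Pc)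
    have SB1 : Summable (fun n : ℕ =>
        (qg (s+1) (z-1) (n+1) - Stmt6Aux.cE (s+1) n) * Stmt6Aux.fB q n) :=
      Stmt6Aux.summable_mul_fB hq hq1 (Pg1.sub Pc')
    have SB2 : Summable (fun n : ℕ =>
        (qg (s+2) (z-1) (n+1) - Stmt6Aux.cE (s+2) n) * Stmt6Aux.fB q n) :=
      Stmt6Aux.summable_mul_fB hq hq1 (Pg2.sub Pc)
    -- splitting the three tsums
    have hsplitL : ∑' n : ℕ, (Stmt6Aux.cE (s+2) n * (Stmt6Aux.fA q z (n+1) - Stmt6Aux.fB q n)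
          + qg (s+2) z (n+1) * Stmt6Aux.fB q n)
        = (∑' n : ℕ, Stmt6Aux.cE (s+2) n * Stmt6Aux.fA q z (n+1))
          + ∑' n : ℕ, (qg (s+2) z (n+1) - Stmt6Aux.cE (s+2) n) * Stmt6Aux.fB q n := by
      rw [← Summable.tsum_add SAc1 SB]
      exact tsum_congr fun n => by ring
    have hsplitR2 : ∑' n : ℕ,
        (Stmt6Aux.cE (s+2) n * (Stmt6Aux.fA q (z-1) (n+1) - Stmt6Aux.fB q n)
          + qg (s+2) (z-1) (n+1) * Stmt6Aux.fB q n)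
        = (∑' n : ℕ, Stmt6Aux.cE (s+2) n * Stmt6Aux.fA q z n)
          + ∑' n : ℕ, (qg (s+2) (z-1) (n+1) - Stmt6Aux.cE (s+2) n) * Stmt6Aux.fB q n := by
      rw [← Summable.tsum_add SAc SB2]
      exact tsum_congr fun n => by rw [Stmt6Aux.fA_pred]; ring
    have hsplitR1 : ∑' n : ℕ,
        (Stmt6Aux.cE (s+1) n * (Stmt6Aux.fA q (z-1) (n+1) - Stmt6Aux.fB q n)
          + qg (s+1) (z-1) (n+1) * Stmt6Aux.fB q n)
        = (∑' n : ℕ, Stmt6Aux.cE (s+1) n * Stmt6Aux.fA q z n)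
          + ∑' n : ℕ, (qg (s+1) (z-1) (n+1) - Stmt6Aux.cE (s+1) n) * Stmt6Aux.fB q n := by
      rw [← Summable.tsum_add SAc' SB1]
      exact tsum_congr fun n => by rw [Stmt6Aux.fA_pred]; ring
    -- the A-part identity
    have Scomb : Summable (fun n : ℕ =>
        (Stmt6Aux.cE (s+1) n + Stmt6Aux.cE (s+2) n) * Stmt6Aux.fA q z n) :=
      Stmt6Aux.summable_mul_fA hq hq1 hz (Pc'.add Pc)
    have hAkey : ∑' n : ℕ, Stmt6Aux.cE (s+2) n * Stmt6Aux.fA q z (n+1)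
        = (∑' n : ℕ, Stmt6Aux.cE (s+1) n * Stmt6Aux.fA q z n)
          + ∑' n : ℕ, Stmt6Aux.cE (s+2) n * Stmt6Aux.fA q z n := by
      rw [← Summable.tsum_add SAc' SAc]
      have hcomb : ∑' n : ℕ, (Stmt6Aux.cE (s+1) n * Stmt6Aux.fA q z n
            + Stmt6Aux.cE (s+2) n * Stmt6Aux.fA q z n)
          = ∑' n : ℕ, ((Stmt6Aux.cE (s+1) n + Stmt6Aux.cE (s+2) n) * Stmt6Aux.fA q z n) :=
        tsum_congr fun n => by ring
      rw [hcomb, Summable.tsum_eq_zero_add Scomb, Stmt6Aux.cE_zero_sum, zero_mul, zero_add]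
      exact (tsum_congr fun n => by rw [Stmt6Aux.cE_succ_succ]).symm
    -- the B-part identity
    have hBkey : ∑' n : ℕ, (qg (s+2) z (n+1) - Stmt6Aux.cE (s+2) n) * Stmt6Aux.fB q n
        = (∑' n : ℕ, (qg (s+1) (z-1) (n+1) - Stmt6Aux.cE (s+1) n) * Stmt6Aux.fB q n)
          + ∑' n : ℕ, (qg (s+2) (z-1) (n+1) - Stmt6Aux.cE (s+2) n) * Stmt6Aux.fB q n := by
      rw [← Summable.tsum_add SB1 SB2]
      exact tsum_congr fun n => by rw [← add_mul, Stmt6Aux.qg_key s z n]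
    rw [hL, hsub, hR1, hR2, hsplitL, hsplitR1, hsplitR2, hAkey, hBkey,
      Stmt6Aux.genBinom_pascal z (s+1), ← Complex.exp_add]
    congr 1
    ring
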